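/- Let n ≥ 1, let g₁, g₂ ∈ ℂⁿ be linearly independent, and let a₁, a₂, c₁, c₂, P_max > 0. With b₁ = |g₁ᴴĝ₂| and b₂ = |g₁ᴴĝ₂⊥|, define R₁^min = log₂(1 + a₁/(P_max·‖g₁‖² + c₁)) and R₁^ZF2 = log₂(1 + a₁/(P_max·b₂² + c₁)). Then for every real R₁ with R₁^min ≤ R₁ < R₁^ZF2, setting φ = a₁/(2^{R₁} − 1) − c₁ and κ* = (b₁·√φ − b₂·√((b₁² + b₂²)·P_max − φ))/(b₁² + b₂²), the set { R₂^S(Q) : Q ∈ Ω, R₁^S(Q) = R₁ } has greatest element f_max(R₁) = log₂(1 + a₂/((κ*)²·‖g₂‖² + c₂)). (This is the second case of Theorem 2 of the paper, giving the closed form of the upper boundary of the achievable rate region for the two suspicious links.) -/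

import Mathlib

open Matrix
open scoped ComplexOrder

namespace Stmt7Aux

variable {n : ℕ}

lemma dot_self_re_nonneg (x : Fin n → ℂ) : 0 ≤ (star x ⬝ᵥ x).re :=
  (Complex.le_def.mp (dotProduct_star_self_nonneg x)).1

lemma dot_self_im (x : Fin n → ℂ) : (star x ⬝ᵥ x).im = 0 :=
  ((Complex.le_def.mp (dotProduct_star_self_nonneg x)).2).symm

lemma dot_self_coe (x : Fin n → ℂ) : (((star x ⬝ᵥ x).re : ℝ) : ℂ) = star x ⬝ᵥ x :=
  Complex.ext rfl (by simp [dot_self_im])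

lemma dot_conj (x y : Fin n → ℂ) : star x ⬝ᵥ y = starRingEnd ℂ (star y ⬝ᵥ x) :=
  Matrix.star_dotProduct x y

lemma dot_self_re_sum (x : Fin n → ℂ) :
    (star x ⬝ᵥ x).re = ∑ j, Complex.normSq (x j) := by
  rw [dotProduct, Complex.re_sum]
  refine Finset.sum_congr rfl fun j _ => ?_
  simp [Complex.normSq_apply, Complex.mul_re]

/-- Bessel inequality for two orthonormal vectors, dot-product form. -/
lemma bessel2 (u w r : Fin n → ℂ) (huu : star u ⬝ᵥ u = 1) (hww : star w ⬝ᵥ w = 1)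
    (huw : star u ⬝ᵥ w = 0) :
    Complex.normSq (star u ⬝ᵥ r) + Complex.normSq (star w ⬝ᵥ r) ≤ (star r ⬝ᵥ r).re := by
  have hwu : star w ⬝ᵥ u = 0 := by
    rw [dot_conj w u, huw, map_zero]
  set a := star u ⬝ᵥ r with ha
  set b := star w ⬝ᵥ r with hb
  have h1 : star r ⬝ᵥ u = starRingEnd ℂ a := by rw [dot_conj]
  have h2 : star r ⬝ᵥ w = starRingEnd ℂ b := by rw [dot_conj]
  have hexp : star (r - a • u - b • w) ⬝ᵥ (r - a • u - b • w) =
      star r ⬝ᵥ r - (Complex.normSq a + Complex.normSq b : ℝ) := by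
    simp only [star_sub, star_smul, sub_dotProduct, dotProduct_sub,
      smul_dotProduct, dotProduct_smul, huu, hww, huw, hwu, h1, h2,
      ← ha, ← hb, smul_eq_mul, RCLike.star_def]
    push_cast
    rw [← Complex.mul_conj a, ← Complex.mul_conj b]
    ring
  have hge := dot_self_re_nonneg (r - a • u - b • w)
  rw [hexp] at hge
  have : (star r ⬝ᵥ r - ((Complex.normSq a + Complex.normSq b : ℝ) : ℂ)).re
      = (star r ⬝ᵥ r).re - (Complex.normSq a + Complex.normSq b) := by
    simp
  rw [this] at hge
  linarith

lemma quad_eq (B : Matrix (Fin n) (Fin n) ℂ) (v : Fin n → ℂ) :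
    star v ⬝ᵥ (Bᴴ * B) *ᵥ v = star (B *ᵥ v) ⬝ᵥ (B *ᵥ v) := by
  rw [← Matrix.mulVec_mulVec, Matrix.dotProduct_mulVec, ← Matrix.star_mulVec]

lemma trace_re (B : Matrix (Fin n) (Fin n) ℂ) :
    (Bᴴ * B).trace.re = ∑ j, ∑ i, Complex.normSq (B j i) := by
  rw [Matrix.trace]
  simp only [Matrix.diag, Matrix.mul_apply, Matrix.conjTranspose_apply]
  rw [Complex.re_sum]
  rw [Finset.sum_comm]
  refine Finset.sum_congr rfl fun j _ => ?_
  rw [Complex.re_sum]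
  refine Finset.sum_congr rfl fun i _ => ?_
  simp [Complex.normSq_apply, Complex.mul_re]

/-- Sum of two diagonal quadratic forms in orthonormal directions is at most the trace. -/
lemma bessel_trace (B : Matrix (Fin n) (Fin n) ℂ) (u w : Fin n → ℂ)
    (huu : star u ⬝ᵥ u = 1) (hww : star w ⬝ᵥ w = 1) (huw : star u ⬝ᵥ w = 0) :
    (star u ⬝ᵥ (Bᴴ * B) *ᵥ u).re + (star w ⬝ᵥ (Bᴴ * B) *ᵥ w).re ≤ (Bᴴ * B).trace.re := by
  rw [quad_eq, quad_eq, trace_re, dot_self_re_sum, dot_self_re_sum, ← Finset.sum_add_distrib]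
  refine Finset.sum_le_sum fun j _ => ?_
  have hb := bessel2 u w (star (B j)) huu hww huw
  have e1 : star u ⬝ᵥ star (B j) = star ((B *ᵥ u) j) := by
    rw [Matrix.star_dotProduct_star]; rfl
  have e2 : star w ⬝ᵥ star (B j) = star ((B *ᵥ w) j) := by
    rw [Matrix.star_dotProduct_star]; rfl
  have e3 : (star (star (B j)) ⬝ᵥ star (B j)).re = ∑ i, Complex.normSq (B j i) := by
    rw [dot_self_re_sum]
    exact Finset.sum_congr rfl fun i _ => by simp
  rw [e1, e2, e3] at hb
  simpa [Complex.normSq_conj] using hb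


lemma norm_equiv_sq (x : Fin n → ℂ) :
    ‖(WithLp.equiv 2 (Fin n → ℂ)).symm x‖ ^ 2 = (star x ⬝ᵥ x).re := by
  rw [← inner_self_eq_norm_sq (𝕜 := ℂ), WithLp.equiv_symm_apply, EuclideanSpace.inner_toLp_toLp, dotProduct_comm]
  rfl

lemma sqrt_quad (z : Fin n → ℂ) :
    Real.sqrt ((star z ⬝ᵥ z).re) = ‖(WithLp.equiv 2 (Fin n → ℂ)).symm z‖ := by
  rw [← norm_equiv_sq, Real.sqrt_sq (norm_nonneg _)]

lemma sqrt_quad_tri (xv u w : Fin n → ℂ) (c d : ℝ) (hc : 0 ≤ c) (hd : 0 ≤ d)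
    (h : xv = (c : ℂ) • u + (d : ℂ) • w) :
    Real.sqrt ((star xv ⬝ᵥ xv).re) ≤
      c * Real.sqrt ((star u ⬝ᵥ u).re) + d * Real.sqrt ((star w ⬝ᵥ w).re) := by
  rw [sqrt_quad, sqrt_quad, sqrt_quad, h, WithLp.equiv_symm_apply, WithLp.toLp_add, WithLp.toLp_smul,
    WithLp.toLp_smul]
  refine (norm_add_le _ _).trans ?_
  rw [norm_smul, norm_smul]
  simp [Complex.norm_real, abs_of_nonneg hc, abs_of_nonneg hd]

lemma vecMulVec_mulVec (a b v : Fin n → ℂ) : (vecMulVec a b) *ᵥ v = (b ⬝ᵥ v) • a := by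
  ext i
  simp only [Matrix.mulVec, Matrix.vecMulVec_apply, dotProduct, Pi.smul_apply,
    smul_eq_mul, Finset.sum_mul, Finset.mul_sum]
  exact Finset.sum_congr rfl fun j _ => by ring

lemma quad_vecMulVec (w₀ v : Fin n → ℂ) :
    star v ⬝ᵥ (vecMulVec w₀ (star w₀)) *ᵥ v = ((Complex.normSq (star w₀ ⬝ᵥ v) : ℝ) : ℂ) := by
  rw [vecMulVec_mulVec, dotProduct_smul, smul_eq_mul, dot_conj v w₀, Complex.mul_conj]

lemma trace_vecMulVec (a b : Fin n → ℂ) : (vecMulVec a b).trace = b ⬝ᵥ a := by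
  simp only [Matrix.trace, Matrix.diag, Matrix.vecMulVec_apply, dotProduct]
  exact Finset.sum_congr rfl fun j _ => by ring

lemma isHermitian_vecMulVec (w₀ : Fin n → ℂ) : (vecMulVec w₀ (star w₀)).IsHermitian :=
  Matrix.ext fun i j => by
    simp [Matrix.conjTranspose_apply, Matrix.vecMulVec_apply, mul_comm]

lemma posSemidef_vecMulVec (w₀ : Fin n → ℂ) : (vecMulVec w₀ (star w₀)).PosSemidef := by
  refine .of_dotProduct_mulVec_nonneg (isHermitian_vecMulVec w₀) fun v => ?_
  rw [quad_vecMulVec]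
  exact Complex.zero_le_real.mpr (Complex.normSq_nonneg _)


set_option maxHeartbeats 1600000 in
/-- Scalar optimization key lemma. -/
lemma key_scalar (b₁ b₂ P φ κ : ℝ) (hb₁ : 0 < b₁) (hb₂ : 0 ≤ b₂) (hP : 0 < P)
    (hφu : φ ≤ (b₁ ^ 2 + b₂ ^ 2) * P) (hφl : b₂ ^ 2 * P < φ)
    (hκ : κ = (b₁ * Real.sqrt φ - b₂ * Real.sqrt ((b₁ ^ 2 + b₂ ^ 2) * P - φ)) / (b₁ ^ 2 + b₂ ^ 2)) :
    0 < κ ∧ κ ^ 2 ≤ P ∧ b₁ * κ + b₂ * Real.sqrt (P - κ ^ 2) = Real.sqrt φ ∧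
      ∀ x y : ℝ, 0 ≤ x → 0 ≤ y → x ^ 2 + y ^ 2 ≤ P → Real.sqrt φ ≤ b₁ * x + b₂ * y → κ ≤ x := by
  have hS : 0 < b₁ ^ 2 + b₂ ^ 2 := by positivity
  have hφ0 : 0 < φ := lt_of_le_of_lt (by positivity) hφl
  set s := Real.sqrt φ with hsd
  set t := Real.sqrt ((b₁ ^ 2 + b₂ ^ 2) * P - φ) with htd
  have hs0 : 0 < s := Real.sqrt_pos.mpr hφ0
  have ht0 : 0 ≤ t := Real.sqrt_nonneg _
  have hs2 : s ^ 2 = φ := Real.sq_sqrt hφ0.le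
  have ht2 : t ^ 2 = (b₁ ^ 2 + b₂ ^ 2) * P - φ := Real.sq_sqrt (by linarith)
  clear_value s t
  clear hsd htd
  have e1 : (b₁ ^ 2 + b₂ ^ 2) * κ = b₁ * s - b₂ * t := by rw [hκ]; field_simp
  -- positivity of κ
  have h2 : b₂ * t < b₁ * s := by
    have h1 : (b₂ * t) ^ 2 < (b₁ * s) ^ 2 := by nlinarith
    nlinarith [mul_pos hb₁ hs0, mul_nonneg hb₂ ht0]
  have hκpos : 0 < κ := by
    rw [hκ]; apply div_pos _ hS; linarith
  have hid : (P - κ ^ 2) * (b₁ ^ 2 + b₂ ^ 2) ^ 2 = (b₁ * t + b₂ * s) ^ 2 := by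
    linear_combination (-((b₁ ^ 2 + b₂ ^ 2) * κ + b₁ * s - b₂ * t)) * e1
      - (b₁ ^ 2 + b₂ ^ 2) * hs2 - (b₁ ^ 2 + b₂ ^ 2) * ht2
  have hPκ : κ ^ 2 ≤ P := by
    have h0 : 0 ≤ (P - κ ^ 2) * (b₁ ^ 2 + b₂ ^ 2) ^ 2 := hid ▸ sq_nonneg _
    have hS2 : 0 < (b₁ ^ 2 + b₂ ^ 2) ^ 2 := by positivity
    nlinarith [h0, hS2]
  have hid' : P - κ ^ 2 = ((b₁ * t + b₂ * s) / (b₁ ^ 2 + b₂ ^ 2)) ^ 2 := by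
    field_simp; linear_combination hid
  have hsqrt : Real.sqrt (P - κ ^ 2) = (b₁ * t + b₂ * s) / (b₁ ^ 2 + b₂ ^ 2) := by
    rw [hid', Real.sqrt_sq (by positivity)]
  have heq : b₁ * κ + b₂ * Real.sqrt (P - κ ^ 2) = s := by
    rw [hsqrt]; field_simp; linear_combination b₁ * e1
  refine ⟨hκpos, hPκ, heq, ?_⟩
  intro x y hx hy hxy hbound
  rcases le_or_gt s (b₁ * x) with hcase | hcase
  · -- x ≥ s / b₁ ≥ κ
    have hκb : (b₁ ^ 2 + b₂ ^ 2) * κ ≤ b₁ * s := by rw [e1]; linarith [mul_nonneg hb₂ ht0]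
    have h3 : b₁ * s ≤ b₁ * (b₁ * x) := mul_le_mul_of_nonneg_left hcase hb₁.le
    have h4 : b₁ * (b₁ * x) ≤ (b₁ ^ 2 + b₂ ^ 2) * x := by nlinarith [sq_nonneg b₂]
    have : (b₁ ^ 2 + b₂ ^ 2) * κ ≤ (b₁ ^ 2 + b₂ ^ 2) * x := by linarith
    exact le_of_mul_le_mul_left this hS
  · have hp1 : (s - b₁ * x) ^ 2 ≤ (b₂ * y) ^ 2 :=
      pow_le_pow_left₀ (by linarith) (by linarith) 2
    have h6 : b₂ ^ 2 * y ^ 2 ≤ b₂ ^ 2 * (P - x ^ 2) :=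
      mul_le_mul_of_nonneg_left (by linarith) (sq_nonneg b₂)
    have hx2 : (b₁ ^ 2 + b₂ ^ 2) * x ^ 2 - 2 * b₁ * s * x + (s ^ 2 - b₂ ^ 2 * P) ≤ 0 := by
      nlinarith [hp1, h6]
    have hkey : b₁ * s - (b₁ ^ 2 + b₂ ^ 2) * x ≤ b₂ * t := by
      rcases le_or_gt (b₁ * s - (b₁ ^ 2 + b₂ ^ 2) * x) 0 with hneg | hpos
      · linarith [mul_nonneg hb₂ ht0]
      · have hx2S : (b₁ ^ 2 + b₂ ^ 2) *
            ((b₁ ^ 2 + b₂ ^ 2) * x ^ 2 - 2 * b₁ * s * x + (s ^ 2 - b₂ ^ 2 * P)) ≤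
            (b₁ ^ 2 + b₂ ^ 2) * 0 := mul_le_mul_of_nonneg_left hx2 hS.le
        have hsq : (b₁ * s - (b₁ ^ 2 + b₂ ^ 2) * x) ^ 2 ≤ (b₂ * t) ^ 2 := by
          nlinarith [hx2S, ht2, hs2]
        nlinarith [mul_nonneg hb₂ ht0, hsq]
    have : (b₁ ^ 2 + b₂ ^ 2) * κ ≤ (b₁ ^ 2 + b₂ ^ 2) * x := by rw [e1]; linarith
    exact le_of_mul_le_mul_left this hS

end Stmt7Aux


open Stmt7Aux

set_option maxHeartbeats 1000000 in
/-- Second case of Theorem 2 of the paper. -/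
theorem stmt7 (n : ℕ) (hn : 1 ≤ n) (g₁ g₂ : Fin n → ℂ)
    (hli : LinearIndependent ℂ ![g₁, g₂])
    (a₁ a₂ c₁ c₂ Pmax : ℝ)
    (ha₁ : 0 < a₁) (ha₂ : 0 < a₂) (hc₁ : 0 < c₁) (hc₂ : 0 < c₂) (hPmax : 0 < Pmax)
    (gh2 gperp ghperp : Fin n → ℂ)
    (hgh2 : gh2 = (Real.sqrt ((star g₂ ⬝ᵥ g₂).re))⁻¹ • g₂)
    (hgperp : gperp = g₁ - (star gh2 ⬝ᵥ g₁) • gh2)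
    (hghperp : ghperp = (Real.sqrt ((star gperp ⬝ᵥ gperp).re))⁻¹ • gperp)
    (b₁ b₂ : ℝ)
    (hb₁ : b₁ = ‖star g₁ ⬝ᵥ gh2‖)
    (hb₂ : b₂ = ‖star g₁ ⬝ᵥ ghperp‖)
    (R₁ : ℝ)
    (hR₁l : Real.logb 2 (1 + a₁ / (Pmax * (star g₁ ⬝ᵥ g₁).re + c₁)) ≤ R₁)
    (hR₁u : R₁ < Real.logb 2 (1 + a₁ / (Pmax * b₂ ^ 2 + c₁)))
    (φ : ℝ) (hφ : φ = a₁ / ((2 : ℝ) ^ R₁ - 1) - c₁)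
    (κ : ℝ) (hκ : κ = (b₁ * Real.sqrt φ -
      b₂ * Real.sqrt ((b₁ ^ 2 + b₂ ^ 2) * Pmax - φ)) / (b₁ ^ 2 + b₂ ^ 2)) :
    IsGreatest
      {r : ℝ | ∃ Q : Matrix (Fin n) (Fin n) ℂ, Q.PosSemidef ∧ Q.trace.re ≤ Pmax ∧
        Real.logb 2 (1 + a₁ / ((star g₁ ⬝ᵥ Q.mulVec g₁).re + c₁)) = R₁ ∧
        r = Real.logb 2 (1 + a₂ / ((star g₂ ⬝ᵥ Q.mulVec g₂).re + c₂))}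
      (Real.logb 2 (1 + a₂ / (κ ^ 2 * (star g₂ ⬝ᵥ g₂).re + c₂))) := by
  -- ### basic nonnegativity and nondegeneracy facts
  have hb₂0 : 0 ≤ b₂ := hb₂ ▸ (norm_nonneg _)
  have hpair := LinearIndependent.pair_iff.mp hli
  have hg₂ne : g₂ ≠ 0 := by
    intro h
    exact one_ne_zero ((hpair 0 1 (by simp [h])).2)
  have hg₂dre : 0 < (star g₂ ⬝ᵥ g₂).re := by
    have h := Matrix.dotProduct_star_self_pos_iff.mpr hg₂ne
    exact (Complex.lt_def.mp h).1
  set n₂ : ℝ := Real.sqrt ((star g₂ ⬝ᵥ g₂).re) with hn₂d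
  have hn₂ : 0 < n₂ := Real.sqrt_pos.mpr hg₂dre
  have hn₂sq : n₂ ^ 2 = (star g₂ ⬝ᵥ g₂).re := Real.sq_sqrt hg₂dre.le
  have hgh2' : gh2 = ((n₂⁻¹ : ℝ) : ℂ) • g₂ := by
    rw [hgh2]; funext i; simp [Complex.real_smul]
  have hg₂coe : star g₂ ⬝ᵥ g₂ = ((n₂ ^ 2 : ℝ) : ℂ) := by
    rw [hn₂sq]; exact (dot_self_coe g₂).symm
  have F1 : star gh2 ⬝ᵥ gh2 = 1 := by
    rw [hgh2', star_smul, smul_dotProduct, dotProduct_smul, hg₂coe]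
    simp only [smul_eq_mul, RCLike.star_def, Complex.conj_ofReal]
    push_cast
    field_simp
    try ring
  have hg₂gh2 : star g₂ ⬝ᵥ gh2 = ((n₂ : ℝ) : ℂ) := by
    rw [hgh2', dotProduct_smul, hg₂coe]
    simp only [smul_eq_mul]
    push_cast
    field_simp
  set c : ℂ := star gh2 ⬝ᵥ g₁ with hc
  have hb₁c : b₁ = ‖c‖ := by
    rw [hb₁, dot_conj g₁ gh2, hc, Complex.norm_conj]
  have hcgh2 : c = ((n₂⁻¹ : ℝ) : ℂ) * (star g₂ ⬝ᵥ g₁) := by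
    rw [hc, hgh2', star_smul, smul_dotProduct]
    simp [Complex.conj_ofReal]
  have hgperpu : star gh2 ⬝ᵥ gperp = 0 := by
    rw [hgperp, dotProduct_sub, dotProduct_smul, F1, ← hc]
    simp
  have hgperpne : gperp ≠ 0 := by
    intro h0
    have hdec0 : g₁ = c • gh2 := by
      have := hgperp.symm.trans h0
      rwa [sub_eq_zero] at this
    rw [hgh2', smul_smul] at hdec0
    have := (hpair 1 (-(c * ((n₂⁻¹ : ℝ) : ℂ))) (by rw [one_smul, hdec0]; ring_nf; simp)).1
    exact one_ne_zero this
  have hgpre : 0 < (star gperp ⬝ᵥ gperp).re := by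
    have h := Matrix.dotProduct_star_self_pos_iff.mpr hgperpne
    exact (Complex.lt_def.mp h).1
  set np : ℝ := Real.sqrt ((star gperp ⬝ᵥ gperp).re) with hnpd
  have hnp : 0 < np := Real.sqrt_pos.mpr hgpre
  have hnpsq : np ^ 2 = (star gperp ⬝ᵥ gperp).re := Real.sq_sqrt hgpre.le
  have hgperpcoe : star gperp ⬝ᵥ gperp = ((np ^ 2 : ℝ) : ℂ) := by
    rw [hnpsq]; exact (dot_self_coe gperp).symm
  have hghperp' : ghperp = ((np⁻¹ : ℝ) : ℂ) • gperp := by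
    rw [hghperp]; funext i; simp [Complex.real_smul]
  have F2 : star ghperp ⬝ᵥ ghperp = 1 := by
    rw [hghperp', star_smul, smul_dotProduct, dotProduct_smul, hgperpcoe]
    simp only [smul_eq_mul, RCLike.star_def, Complex.conj_ofReal]
    push_cast
    field_simp
    try ring
  have F3 : star gh2 ⬝ᵥ ghperp = 0 := by
    rw [hghperp', dotProduct_smul, hgperpu, smul_zero]
  have hdec : g₁ = c • gh2 + gperp := by
    rw [hgperp]; abel
  have hg₁perp : star g₁ ⬝ᵥ gperp = ((np ^ 2 : ℝ) : ℂ) := by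
    conv_lhs => rw [hdec]
    rw [star_add, star_smul, add_dotProduct, smul_dotProduct, hgperpu,
      hgperpcoe]
    simp
  have hg₁hp : star g₁ ⬝ᵥ ghperp = ((np : ℝ) : ℂ) := by
    rw [hghperp', dotProduct_smul, hg₁perp]
    simp only [smul_eq_mul]
    push_cast
    field_simp
  have hb₂np : b₂ = np := by
    rw [hb₂, hg₁hp, Complex.norm_real, Real.norm_eq_abs, abs_of_pos hnp]
  have hdecnp : g₁ = c • gh2 + ((np : ℝ) : ℂ) • ghperp := by
    rw [hghperp', smul_smul]
    have : ((np : ℝ) : ℂ) * ((np⁻¹ : ℝ) : ℂ) = 1 := by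
      push_cast; field_simp
    rw [this, one_smul]
    exact hdec
  -- norm identity re(g₁ᴴg₁) = b₁² + b₂²
  have hN : (star g₁ ⬝ᵥ g₁).re = b₁ ^ 2 + b₂ ^ 2 := by
    have hexp : star g₁ ⬝ᵥ g₁ = ((Complex.normSq c + np ^ 2 : ℝ) : ℂ) := by
      conv_lhs => rw [hdecnp]
      rw [star_add, star_smul, star_smul, add_dotProduct, smul_dotProduct,
        smul_dotProduct, dotProduct_add, dotProduct_add,
        dotProduct_smul, dotProduct_smul, dotProduct_smul,
        dotProduct_smul, F1, F2, F3]
      have hwu : star ghperp ⬝ᵥ gh2 = 0 := by rw [dot_conj, F3, map_zero]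
      rw [hwu]
      simp only [smul_eq_mul, mul_zero, mul_one, zero_add, add_zero, RCLike.star_def,
        Complex.conj_ofReal]
      push_cast
      rw [mul_comm ((starRingEnd ℂ) c) c, Complex.mul_conj]
      ring
    rw [hexp]
    have : Complex.normSq c = b₁ ^ 2 := by
      rw [Complex.normSq_eq_norm_sq, ← hb₁c]
    rw [Complex.ofReal_re, this, hb₂np]
  -- ### rate bounds
  have hNnn : 0 ≤ (star g₁ ⬝ᵥ g₁).re := dot_self_re_nonneg g₁
  have hden1 : 0 < Pmax * (star g₁ ⬝ᵥ g₁).re + c₁ := by positivity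
  have hX1 : 1 < 1 + a₁ / (Pmax * (star g₁ ⬝ᵥ g₁).re + c₁) := by
    have : 0 < a₁ / (Pmax * (star g₁ ⬝ᵥ g₁).re + c₁) := by positivity
    linarith
  have h2R₁ : 1 + a₁ / (Pmax * (star g₁ ⬝ᵥ g₁).re + c₁) ≤ (2 : ℝ) ^ R₁ := by
    calc 1 + a₁ / (Pmax * (star g₁ ⬝ᵥ g₁).re + c₁)
        = (2 : ℝ) ^ Real.logb 2 (1 + a₁ / (Pmax * (star g₁ ⬝ᵥ g₁).re + c₁)) :=
          (Real.rpow_logb (by norm_num) (by norm_num) (by linarith)).symm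
      _ ≤ (2 : ℝ) ^ R₁ := (Real.rpow_le_rpow_left_iff one_lt_two).mpr hR₁l
  have hgt1 : (1 : ℝ) < (2 : ℝ) ^ R₁ := lt_of_lt_of_le hX1 h2R₁
  have he : (0 : ℝ) < (2 : ℝ) ^ R₁ - 1 := by linarith
  have hden2 : 0 < Pmax * b₂ ^ 2 + c₁ := by positivity
  have h2R₁u : (2 : ℝ) ^ R₁ < 1 + a₁ / (Pmax * b₂ ^ 2 + c₁) := by
    calc (2 : ℝ) ^ R₁ < (2 : ℝ) ^ Real.logb 2 (1 + a₁ / (Pmax * b₂ ^ 2 + c₁)) :=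
          (Real.rpow_lt_rpow_left_iff one_lt_two).mpr hR₁u
      _ = 1 + a₁ / (Pmax * b₂ ^ 2 + c₁) := by
          refine Real.rpow_logb (by norm_num) (by norm_num) ?_
          have : 0 < a₁ / (Pmax * b₂ ^ 2 + c₁) := by positivity
          linarith
  have hφub : φ ≤ (b₁ ^ 2 + b₂ ^ 2) * Pmax := by
    have h1 : a₁ / (Pmax * (star g₁ ⬝ᵥ g₁).re + c₁) ≤ (2 : ℝ) ^ R₁ - 1 := by linarith
    have h2 : a₁ ≤ ((2 : ℝ) ^ R₁ - 1) * (Pmax * (star g₁ ⬝ᵥ g₁).re + c₁) := by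
      rw [div_le_iff₀ hden1] at h1
      linarith
    have h3 : a₁ / ((2 : ℝ) ^ R₁ - 1) ≤ Pmax * (star g₁ ⬝ᵥ g₁).re + c₁ := by
      rw [div_le_iff₀ he]
      linarith
    rw [hφ, hN] at *
    linarith [h3]
  have hφlb : b₂ ^ 2 * Pmax < φ := by
    have h1 : (2 : ℝ) ^ R₁ - 1 < a₁ / (Pmax * b₂ ^ 2 + c₁) := by linarith
    have h2 : ((2 : ℝ) ^ R₁ - 1) * (Pmax * b₂ ^ 2 + c₁) < a₁ := by
      rw [lt_div_iff₀ hden2] at h1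
      linarith
    have h3 : Pmax * b₂ ^ 2 + c₁ < a₁ / ((2 : ℝ) ^ R₁ - 1) := by
      rw [lt_div_iff₀ he]
      linarith
    rw [hφ]
    linarith
  have hb₁pos : 0 < b₁ := by
    have h0 : 0 ≤ b₁ := hb₁ ▸ (norm_nonneg _)
    rcases h0.lt_or_eq with h | h
    · exact h
    · exfalso
      rw [← h] at hφub
      simp at hφub
      nlinarith
  obtain ⟨hκpos, hκP, heq, hmin⟩ := key_scalar b₁ b₂ Pmax φ κ hb₁pos hb₂0 hPmax hφub hφlb hκ
  have hφ0 : 0 < φ := by nlinarith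
  -- ### the distinguished direction u (packaged opaquely)
  have hcne : c ≠ 0 := by
    intro h
    rw [h, norm_zero] at hb₁c
    exact hb₁pos.ne' (hb₁c)
  have hcconjne : starRingEnd ℂ c ≠ 0 := by simpa using hcne
  obtain ⟨u, ν, huu, huw, hdecu, hg₂eq, hνns⟩ :
      ∃ (u : Fin n → ℂ) (ν : ℂ), star u ⬝ᵥ u = 1 ∧ star u ⬝ᵥ ghperp = 0 ∧
        g₁ = ((b₁ : ℝ) : ℂ) • u + ((b₂ : ℝ) : ℂ) • ghperp ∧
        g₂ = ν • u ∧ Complex.normSq ν = n₂ ^ 2 := by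
    set μ : ℂ := (b₁ : ℂ) / (starRingEnd ℂ c) with hμ
    have hμns : Complex.normSq μ = 1 := by
      rw [hμ, Complex.normSq_div, Complex.normSq_conj, Complex.normSq_ofReal,
        Complex.normSq_eq_norm_sq, ← hb₁c]
      field_simp
      try ring
    have hμne : μ ≠ 0 := by
      rw [hμ]
      exact div_ne_zero (by exact_mod_cast hb₁pos.ne') hcconjne
    have hcb : c * starRingEnd ℂ c = ((b₁ ^ 2 : ℝ) : ℂ) := by
      rw [Complex.mul_conj, Complex.normSq_eq_norm_sq, ← hb₁c]
      try norm_num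
    have hscal : ((b₁ : ℝ) : ℂ) * μ = c := by
      rw [hμ, ← mul_div_assoc, div_eq_iff hcconjne, hcb]
      push_cast
      ring
    have hg₂gh2' : g₂ = ((n₂ : ℝ) : ℂ) • gh2 := by
      rw [hgh2', smul_smul]
      have : ((n₂ : ℝ) : ℂ) * ((n₂⁻¹ : ℝ) : ℂ) = 1 := by
        push_cast
        field_simp
      rw [this, one_smul]
    refine ⟨μ • gh2, ((n₂ : ℝ) : ℂ) * μ⁻¹, ?_, ?_, ?_, ?_, ?_⟩
    · rw [star_smul, smul_dotProduct, dotProduct_smul, F1]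
      simp only [smul_eq_mul, mul_one, RCLike.star_def]
      rw [mul_comm, Complex.mul_conj, hμns]
      norm_num
    · rw [star_smul, smul_dotProduct, F3, smul_zero]
    · rw [smul_smul, hb₂np, hscal]
      exact hdecnp
    · rw [smul_smul, mul_assoc, inv_mul_cancel₀ hμne, mul_one]
      exact hg₂gh2'
    · rw [Complex.normSq_mul, Complex.normSq_inv, hμns, Complex.normSq_ofReal]
      simp [sq]
  have hwu' : star ghperp ⬝ᵥ u = 0 := by rw [dot_conj, huw, map_zero]
  have hg₁u : star g₁ ⬝ᵥ u = ((b₁ : ℝ) : ℂ) := by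
    conv_lhs => rw [hdecu]
    rw [star_add, star_smul, star_smul, add_dotProduct, smul_dotProduct,
      smul_dotProduct, huu, hwu']
    simp [Complex.conj_ofReal]
  have hg₁w' : star g₁ ⬝ᵥ ghperp = ((b₂ : ℝ) : ℂ) := by rw [hg₁hp, hb₂np]
  have hg₂u : star g₂ ⬝ᵥ u = starRingEnd ℂ ν := by
    conv_lhs => rw [hg₂eq]
    rw [star_smul, smul_dotProduct, huu]
    simp
  have hg₂w : star g₂ ⬝ᵥ ghperp = 0 := by
    conv_lhs => rw [hg₂eq]
    rw [star_smul, smul_dotProduct, huw]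
    simp
  -- square root facts
  have hsφ : Real.sqrt φ ^ 2 = φ := Real.sq_sqrt hφ0.le
  constructor
  · -- ### membership: the optimal beamformer
    set β : ℝ := Real.sqrt (Pmax - κ ^ 2) with hβd
    have hβ0 : 0 ≤ β := Real.sqrt_nonneg _
    have hβsq : β ^ 2 = Pmax - κ ^ 2 := Real.sq_sqrt (by linarith)
    have hκβφ : κ * b₁ + β * b₂ = Real.sqrt φ := by
      rw [hβd]; linarith [heq]
    obtain ⟨w₀, hw₀self, hg₁w₀, hg₂w₀⟩ :
        ∃ w₀ : Fin n → ℂ, star w₀ ⬝ᵥ w₀ = ((κ ^ 2 + β ^ 2 : ℝ) : ℂ) ∧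
          star g₁ ⬝ᵥ w₀ = ((κ * b₁ + β * b₂ : ℝ) : ℂ) ∧
          star g₂ ⬝ᵥ w₀ = ((κ : ℝ) : ℂ) * starRingEnd ℂ ν := by
      refine ⟨((κ : ℝ) : ℂ) • u + ((β : ℝ) : ℂ) • ghperp, ?_, ?_, ?_⟩
      · rw [star_add, star_smul, star_smul, add_dotProduct,
          smul_dotProduct, smul_dotProduct, dotProduct_add,
          dotProduct_add, dotProduct_smul, dotProduct_smul,
          dotProduct_smul, dotProduct_smul, huu, F2, huw, hwu']
        simp only [smul_eq_mul, mul_one, mul_zero, add_zero, zero_add, RCLike.star_def,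
          Complex.conj_ofReal]
        push_cast
        ring
      · rw [dotProduct_add, dotProduct_smul, dotProduct_smul,
          hg₁u, hg₁w']
        simp only [smul_eq_mul]
        push_cast
        ring
      · rw [dotProduct_add, dotProduct_smul, dotProduct_smul,
          hg₂u, hg₂w]
        simp
    refine ⟨vecMulVec w₀ (star w₀), posSemidef_vecMulVec w₀, ?_, ?_, ?_⟩
    · rw [Stmt7Aux.trace_vecMulVec, hw₀self]
      simp only [Complex.ofReal_re]
      linarith
    · have hquad : (star g₁ ⬝ᵥ (vecMulVec w₀ (star w₀)) *ᵥ g₁).re = φ := by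
        rw [quad_vecMulVec, Complex.ofReal_re]
        have hcsym : Complex.normSq (star w₀ ⬝ᵥ g₁) = Complex.normSq (star g₁ ⬝ᵥ w₀) := by
          rw [dot_conj w₀ g₁, Complex.normSq_conj]
        rw [hcsym, hg₁w₀, Complex.normSq_ofReal, hκβφ]
        exact Real.mul_self_sqrt hφ0.le
      show Real.logb 2 (1 + a₁ / ((star g₁ ⬝ᵥ (vecMulVec w₀ (star w₀)) *ᵥ g₁).re + c₁)) = R₁
      rw [hquad]
      have hφc : φ + c₁ = a₁ / ((2 : ℝ) ^ R₁ - 1) := by rw [hφ]; ring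
      rw [hφc]
      have hsimp : a₁ / (a₁ / ((2 : ℝ) ^ R₁ - 1)) = (2 : ℝ) ^ R₁ - 1 := by
        field_simp
      rw [hsimp]
      have h1 : 1 + ((2 : ℝ) ^ R₁ - 1) = (2 : ℝ) ^ R₁ := by ring
      rw [h1]
      exact Real.logb_rpow (by norm_num) (by norm_num)
    · show Real.logb 2 (1 + a₂ / (κ ^ 2 * (star g₂ ⬝ᵥ g₂).re + c₂)) =
        Real.logb 2 (1 + a₂ / ((star g₂ ⬝ᵥ (vecMulVec w₀ (star w₀)) *ᵥ g₂).re + c₂))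
      have hquad : (star g₂ ⬝ᵥ (vecMulVec w₀ (star w₀)) *ᵥ g₂).re
          = κ ^ 2 * (star g₂ ⬝ᵥ g₂).re := by
        rw [quad_vecMulVec, Complex.ofReal_re]
        have hcsym : Complex.normSq (star w₀ ⬝ᵥ g₂) = Complex.normSq (star g₂ ⬝ᵥ w₀) := by
          rw [dot_conj w₀ g₂, Complex.normSq_conj]
        rw [hcsym, hg₂w₀, ← hn₂sq, Complex.normSq_mul, Complex.normSq_conj, hνns,
          Complex.normSq_ofReal]
        ring
      rw [hquad]
  · -- ### upper bound
    rintro r ⟨Q, hQ, htr, hrate, hr⟩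
    obtain ⟨B, rfl⟩ : ∃ B : Matrix (Fin n) (Fin n) ℂ, Q = Bᴴ * B := by
      open scoped MatrixOrder Matrix.Norms.L2Operator in
      exact CStarAlgebra.nonneg_iff_eq_star_mul_self.mp hQ.nonneg
    have hqre : ∀ v : Fin n → ℂ, 0 ≤ (star v ⬝ᵥ (Bᴴ * B) *ᵥ v).re := by
      intro v
      rw [quad_eq]
      exact dot_self_re_nonneg _
    have hT0 : 0 ≤ (star g₁ ⬝ᵥ (Bᴴ * B) *ᵥ g₁).re := hqre g₁
    have hTden : 0 < (star g₁ ⬝ᵥ (Bᴴ * B) *ᵥ g₁).re + c₁ := by linarith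
    have hargpos : 0 < 1 + a₁ / ((star g₁ ⬝ᵥ (Bᴴ * B) *ᵥ g₁).re + c₁) := by positivity
    have harg : 1 + a₁ / ((star g₁ ⬝ᵥ (Bᴴ * B) *ᵥ g₁).re + c₁) = (2 : ℝ) ^ R₁ := by
      rw [← hrate]
      exact (Real.rpow_logb (by norm_num) (by norm_num) hargpos).symm
    have hTφ : (star g₁ ⬝ᵥ (Bᴴ * B) *ᵥ g₁).re = φ := by
      have h1 : a₁ / ((star g₁ ⬝ᵥ (Bᴴ * B) *ᵥ g₁).re + c₁) = (2 : ℝ) ^ R₁ - 1 := by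
        linarith
      rw [div_eq_iff hTden.ne'] at h1
      have h2 : a₁ / ((2 : ℝ) ^ R₁ - 1) = (star g₁ ⬝ᵥ (Bᴴ * B) *ᵥ g₁).re + c₁ := by
        rw [div_eq_iff he.ne', h1]
        ring
      rw [hφ]
      linarith [h2]
    have hX0 := hqre u
    have hY0 := hqre ghperp
    set X := Real.sqrt ((star u ⬝ᵥ (Bᴴ * B) *ᵥ u).re) with hX
    set Y := Real.sqrt ((star ghperp ⬝ᵥ (Bᴴ * B) *ᵥ ghperp).re) with hY
    have hXnn : 0 ≤ X := Real.sqrt_nonneg _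
    have hYnn : 0 ≤ Y := Real.sqrt_nonneg _
    have hXsq : X ^ 2 = (star u ⬝ᵥ (Bᴴ * B) *ᵥ u).re := Real.sq_sqrt hX0
    have hYsq : Y ^ 2 = (star ghperp ⬝ᵥ (Bᴴ * B) *ᵥ ghperp).re := Real.sq_sqrt hY0
    have hsum : X ^ 2 + Y ^ 2 ≤ Pmax := by
      rw [hXsq, hYsq]
      exact (bessel_trace B u ghperp huu F2 huw).trans htr
    have htri : Real.sqrt φ ≤ b₁ * X + b₂ * Y := by
      have hdecB : B *ᵥ g₁ = ((b₁ : ℝ) : ℂ) • (B *ᵥ u) + ((b₂ : ℝ) : ℂ) • (B *ᵥ ghperp) := by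
        conv_lhs => rw [hdecu]
        rw [Matrix.mulVec_add, Matrix.mulVec_smul, Matrix.mulVec_smul]
      have h1 := sqrt_quad_tri (B *ᵥ g₁) (B *ᵥ u) (B *ᵥ ghperp) b₁ b₂ hb₁pos.le hb₂0 hdecB
      simp only [← quad_eq] at h1
      rw [hTφ] at h1
      exact h1
    have hκX : κ ≤ X := hmin X Y hXnn hYnn hsum htri
    have hκ2X : κ ^ 2 ≤ X ^ 2 := pow_le_pow_left₀ hκpos.le hκX 2
    have hg₂quad : (star g₂ ⬝ᵥ (Bᴴ * B) *ᵥ g₂).re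
        = n₂ ^ 2 * (star u ⬝ᵥ (Bᴴ * B) *ᵥ u).re := by
      conv_lhs => rw [hg₂eq]
      rw [star_smul, smul_dotProduct, Matrix.mulVec_smul, dotProduct_smul,
        smul_eq_mul, smul_eq_mul, ← mul_assoc]
      have hν : star ν * ν = ((n₂ ^ 2 : ℝ) : ℂ) := by
        rw [RCLike.star_def, mul_comm, Complex.mul_conj, hνns]
      rw [hν, Complex.re_ofReal_mul]
    have hval : κ ^ 2 * (star g₂ ⬝ᵥ g₂).re ≤ (star g₂ ⬝ᵥ (Bᴴ * B) *ᵥ g₂).re := by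
      rw [hg₂quad, ← hn₂sq, ← hXsq, mul_comm]
      exact mul_le_mul_of_nonneg_left hκ2X (by positivity)
    rw [hr]
    have hd0 : 0 ≤ (star g₂ ⬝ᵥ (Bᴴ * B) *ᵥ g₂).re := hqre g₂
    have hm0 : 0 ≤ κ ^ 2 * (star g₂ ⬝ᵥ g₂).re := by positivity
    apply Real.logb_le_logb_of_le one_lt_two
    · positivity
    · have h1 : 0 < κ ^ 2 * (star g₂ ⬝ᵥ g₂).re + c₂ := by positivity
      have h2 : κ ^ 2 * (star g₂ ⬝ᵥ g₂).re + c₂ ≤ (star g₂ ⬝ᵥ (Bᴴ * B) *ᵥ g₂).re + c₂ := by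
        linarith
      gcongr
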